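/- Let m ∈ ℤ∖{0} and μ ∈ ℝ with |μ| ≥ 1, and suppose u = Σ_{n ≥ max(2,|m|)} c_n Y_n^m ∈ L²(S²) satisfies μ u = cos θ · (I + 6Δ^{−1}) u. Then u = 0. -/

import Mathlib

open Real

/-- Eigenvalue `λ_n = n(n+1)` of `−Δ` on the unit sphere `S²`. -/
def lam (n : ℕ) : ℝ := n * (n + 1)

/-- The recurrence coefficient `a_n^m = √((n−m)(n+m)/((2n−1)(2n+1)))` in
`cos θ · Y_n^m = a_n^m Y_{n−1}^m + a_{n+1}^m Y_{n+1}^m`. -/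
noncomputable def aCoef (n : ℕ) (m : ℤ) : ℝ :=
  Real.sqrt ((((n : ℝ) - (m : ℝ)) * ((n : ℝ) + (m : ℝ))) / ((2 * (n : ℝ) - 1) * (2 * (n : ℝ) + 1)))

lemma b_nonneg {k : ℕ} (hk : 2 ≤ k) : 0 ≤ 1 - 6 / lam k := by
  have hk' : (2:ℝ) ≤ k := by exact_mod_cast hk
  have h6 : (6:ℝ) ≤ lam k := by unfold lam; nlinarith
  have hpos : (0:ℝ) < lam k := by linarith
  have : 6 / lam k ≤ 1 := (div_le_one hpos).mpr h6
  linarith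

lemma b_le_one {k : ℕ} (hk : 2 ≤ k) : 1 - 6 / lam k ≤ 1 := by
  have hk' : (2:ℝ) ≤ k := by exact_mod_cast hk
  have hpos : (0:ℝ) < lam k := by unfold lam; nlinarith
  have : 0 ≤ 6 / lam k := by positivity
  linarith

lemma b_pos {k : ℕ} (hk : 3 ≤ k) : 0 < 1 - 6 / lam k := by
  have hk' : (3:ℝ) ≤ k := by exact_mod_cast hk
  have h12 : (12:ℝ) ≤ lam k := by unfold lam; nlinarith
  have hpos : (0:ℝ) < lam k := by linarith
  have : 6 / lam k < 1 := (div_lt_one hpos).mpr (by linarith)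
  linarith

lemma aCoef_nonneg (n : ℕ) (m : ℤ) : 0 ≤ aCoef n m := Real.sqrt_nonneg _

lemma aCoef_le_half {k : ℕ} {m : ℤ} (hm : m ≠ 0) (hk : 1 ≤ k) : aCoef k m ≤ 1/2 := by
  have hk' : (1:ℝ) ≤ k := by exact_mod_cast hk
  have h1 : (1:ℝ) ≤ |(m:ℝ)| := by
    rw [← Int.cast_abs]; exact_mod_cast Int.one_le_abs hm
  have hm2 : (1:ℝ) ≤ (m:ℝ)^2 := by nlinarith [sq_abs (m:ℝ)]
  unfold aCoef
  rw [show (1/2 : ℝ) = Real.sqrt (1/4) by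
    rw [show (1/4:ℝ) = (1/2)^2 by norm_num, Real.sqrt_sq (by norm_num)]]
  apply Real.sqrt_le_sqrt
  have hD : 0 < (2*(k:ℝ)-1)*(2*(k:ℝ)+1) := by nlinarith
  rw [div_le_iff₀ hD]
  nlinarith

lemma aCoef_pos {k : ℕ} {m : ℤ} (hk : m.natAbs < k) : 0 < aCoef k m := by
  have hk1 : 1 ≤ k := by omega
  have hk' : (1:ℝ) ≤ k := by exact_mod_cast hk1
  have habs : |(m:ℝ)| < k := by
    rw [← Int.cast_abs, Int.abs_eq_natAbs]; exact_mod_cast hk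
  obtain ⟨hl, hr⟩ := abs_lt.mp habs
  unfold aCoef
  apply Real.sqrt_pos.mpr
  apply div_pos
  · nlinarith
  · nlinarith

/-- Case 1 (`μ ∈ ℝ`, `|μ| ≥ 1`) in the proof of Theorem `T:NoEi_Pm`, stated in terms
of the coefficients of the expansion `u = Σ_{n ≥ max(2,|m|)} c_n Y_n^m ∈ P_m L²₀(S²)`.
Since `cos θ · Y_n^m = a_n^m Y_{n−1}^m + a_{n+1}^m Y_{n+1}^m` and
`(I + 6Δ^{−1})Y_n^m = (1 − 6/λ_n)Y_n^m`, the equation `μ u = cos θ · (I + 6Δ^{−1})u`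
is equivalent to the stated coefficient recurrence.  Conclusion: `u = 0`. -/
theorem stmt_12 (m : ℤ) (hm : m ≠ 0) (μ : ℝ) (hμ : 1 ≤ |μ|) (c : ℕ → ℂ)
    (hsupp : ∀ n, n < max 2 m.natAbs → c n = 0)
    (hsum : Summable fun n => ‖c n‖ ^ 2)
    (heq : ∀ n, max 1 m.natAbs ≤ n →
      (μ : ℂ) * c n = (((1 - 6 / lam (n + 1)) * aCoef (n + 1) m : ℝ) : ℂ) * c (n + 1)
        + (((1 - 6 / lam (n - 1)) * aCoef n m : ℝ) : ℂ) * c (n - 1)) :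
    ∀ n, c n = 0 := by
  set N := max 2 m.natAbs with hN
  have hN2 : 2 ≤ N := le_max_left _ _
  have hNm : m.natAbs ≤ N := le_max_right _ _
  -- key inequality
  have key : ∀ n, N ≤ n → ‖c n‖ ≤ (‖c (n-1)‖ + ‖c (n+1)‖) / 2 := by
    intro n hn
    have h := heq n (max_le (by omega) (by omega))
    have h1 : ‖(((1 - 6 / lam (n + 1)) * aCoef (n + 1) m : ℝ) : ℂ) * c (n + 1)‖
        ≤ ‖c (n+1)‖ / 2 := by
      rw [norm_mul, Complex.norm_real, Real.norm_eq_abs, abs_mul]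
      have hb0 := b_nonneg (show 2 ≤ n+1 by omega)
      have hb1 := b_le_one (show 2 ≤ n+1 by omega)
      have ha0 := aCoef_nonneg (n+1) m
      have ha := aCoef_le_half hm (show 1 ≤ n+1 by omega)
      rw [abs_of_nonneg hb0, abs_of_nonneg ha0]
      have hba : (1 - 6 / lam (n+1)) * aCoef (n+1) m ≤ 1/2 := by
        calc (1 - 6 / lam (n+1)) * aCoef (n+1) m ≤ 1 * (1/2) :=
              mul_le_mul hb1 ha ha0 zero_le_one
          _ = 1/2 := by ring
      have := mul_le_mul_of_nonneg_right hba (norm_nonneg (c (n+1)))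
      linarith
    have h2 : ‖(((1 - 6 / lam (n - 1)) * aCoef n m : ℝ) : ℂ) * c (n - 1)‖
        ≤ ‖c (n-1)‖ / 2 := by
      by_cases hc : n - 1 < N
      · rw [hsupp _ hc]; simp
      · push_neg at hc
        rw [norm_mul, Complex.norm_real, Real.norm_eq_abs, abs_mul]
        have hb0 := b_nonneg (show 2 ≤ n-1 by omega)
        have hb1 := b_le_one (show 2 ≤ n-1 by omega)
        have ha0 := aCoef_nonneg n m
        have ha := aCoef_le_half hm (show 1 ≤ n by omega)
        rw [abs_of_nonneg hb0, abs_of_nonneg ha0]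
        have hba : (1 - 6 / lam (n-1)) * aCoef n m ≤ 1/2 := by
          calc (1 - 6 / lam (n-1)) * aCoef n m ≤ 1 * (1/2) :=
                mul_le_mul hb1 ha ha0 zero_le_one
            _ = 1/2 := by ring
        have := mul_le_mul_of_nonneg_right hba (norm_nonneg (c (n-1)))
        linarith
    have hmu : ‖(μ:ℂ) * c n‖ = |μ| * ‖c n‖ := by
      rw [norm_mul, Complex.norm_real, Real.norm_eq_abs]
    have hle : |μ| * ‖c n‖ ≤ ‖c (n+1)‖/2 + ‖c (n-1)‖/2 := by
      rw [← hmu, h]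
      exact (norm_add_le _ _).trans (add_le_add h1 h2)
    have : ‖c n‖ ≤ |μ| * ‖c n‖ := le_mul_of_one_le_left (norm_nonneg _) hμ
    linarith
  -- growth of differences
  have step : ∀ k, ‖c (N+k)‖ + ‖c N‖ ≤ ‖c (N+k+1)‖ := by
    intro k
    induction k with
    | zero =>
      have hk := key N le_rfl
      rw [hsupp (N-1) (by omega), norm_zero] at hk
      simp only [Nat.add_zero]
      linarith
    | succ k ih =>
      have hk := key (N+k+1) (by omega)
      rw [show N+k+1-1 = N+k by omega] at hk
      have : N+k+1+1 = N+k+2 := by omega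
      rw [this] at hk
      calc ‖c (N+k+1)‖ + ‖c N‖ ≤ ‖c (N+k+1)‖ + (‖c (N+k+1)‖ - ‖c (N+k)‖) := by linarith
        _ ≤ ‖c (N+k+2)‖ := by linarith
  have grow : ∀ k : ℕ, ((k:ℝ)+1) * ‖c N‖ ≤ ‖c (N+k)‖ := by
    intro k
    induction k with
    | zero => simp
    | succ k ih =>
      rw [show N+(k+1) = N+k+1 from rfl]
      push_cast
      linarith [step k]
  -- c N = 0
  have hcN : c N = 0 := by
    by_contra h
    have hs : 0 < ‖c N‖ := norm_pos_iff.mpr h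
    have htend : Filter.Tendsto (fun n => ‖c n‖^2) Filter.atTop (nhds 0) :=
      hsum.tendsto_atTop_zero
    have hev : ∀ᶠ n in Filter.atTop, ‖c n‖^2 < ‖c N‖^2 :=
      htend.eventually (gt_mem_nhds (by positivity))
    obtain ⟨n, hn1, hn2⟩ := (hev.and (Filter.eventually_ge_atTop N)).exists
    obtain ⟨k, rfl⟩ := Nat.exists_eq_add_of_le hn2
    have hg := grow k
    have hk0 : (0:ℝ) ≤ (k:ℝ) := Nat.cast_nonneg k
    have h1 : ‖c N‖ ≤ ‖c (N+k)‖ := by nlinarith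
    have h2 := pow_le_pow_left₀ (norm_nonneg (c N)) h1 2
    linarith
  -- nonvanishing of the forward coefficient
  have coefne : ∀ n, N ≤ n → (((1 - 6 / lam (n + 1)) * aCoef (n + 1) m : ℝ) : ℂ) ≠ 0 := by
    intro n hn
    have hb := b_pos (show 3 ≤ n+1 by omega)
    have ha := aCoef_pos (show m.natAbs < n+1 by omega)
    simp only [ne_eq, Complex.ofReal_eq_zero]
    positivity
  -- forward induction
  have zero2 : ∀ k, c (N+k) = 0 ∧ c (N+k+1) = 0 := by
    intro k
    induction k with
    | zero =>
      refine ⟨by simpa using hcN, ?_⟩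
      have h := heq N (max_le (by omega) (by omega))
      rw [hcN, hsupp (N-1) (by omega), mul_zero, mul_zero, add_zero] at h
      simpa using (mul_eq_zero.mp h.symm).resolve_left (coefne N le_rfl)
    | succ k ih =>
      refine ⟨by exact ih.2, ?_⟩
      have h := heq (N+k+1) (max_le (by omega) (by omega))
      rw [show N+k+1-1 = N+k by omega] at h
      rw [ih.2, mul_zero, show N+k+1+1 = N+(k+1)+1 from rfl] at h
      have hz : c (N+k) = 0 := ih.1
      rw [hz, mul_zero, add_zero] at h
      exact (mul_eq_zero.mp h.symm).resolve_left (coefne (N+k+1) (by omega))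
  intro n
  rcases lt_or_ge n N with h | h
  · exact hsupp n h
  · obtain ⟨k, rfl⟩ := Nat.exists_eq_add_of_le h
    exact (zero2 k).1
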